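/- Let n ≥ 3 and 1 ≤ l < k be integers with 2k+1 ≤ n−1, and let κ ∈ ℝ^{n−1} satisfy κ_p ≥ 1 for all p. Let ã_0, …, ã_{l−1} and b̃_l, …, b̃_k be nonnegative real numbers such that Σ_{i=0}^{l−1} ã_i L̃_i(κ) = Σ_{j=l}^{k} b̃_j L̃_j(κ) > 0. Then Σ_{i=0}^{l−1} ã_i Ñ_i(κ) ≥ Σ_{j=l}^{k} b̃_j Ñ_j(κ). -/

import Mathlib

/-- The `k`-th elementary symmetric polynomial of `x ∈ ℝ^m`
(`σ_0 = 1`, `σ_k = 0` for `k > m`). -/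
noncomputable def esymmR (m : ℕ) (x : Fin m → ℝ) (k : ℕ) : ℝ :=
  ∑ s ∈ Finset.powersetCard k (Finset.univ : Finset (Fin m)), ∏ i ∈ s, x i

/-- The normalized `k`-th elementary symmetric function `H_k = σ_k / C(m,k)`
(`H_0 = 1`, `H_k = 0` for `k > m`). -/
noncomputable def Hnorm (m : ℕ) (x : Fin m → ℝ) (k : ℕ) : ℝ :=
  esymmR m x k / (m.choose k : ℝ)

/-- The point of `ℝ^{m-1}` obtained from `x ∈ ℝ^m` by deleting the `p`-th coordinate. -/
def deleteCoord {m : ℕ} (x : Fin m → ℝ) (p : Fin m) : Fin (m - 1) → ℝ :=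
  fun i => if (i : ℕ) < (p : ℕ) then x ⟨(i : ℕ), by have := i.isLt; omega⟩
           else x ⟨(i : ℕ) + 1, by have := i.isLt; omega⟩

/-- `L̃_k(κ) = Σ_{i=0}^{k} C(k,i) (−1)^{k−i} H_{2i}(κ)`, the normalized intrinsic
Gauss-Bonnet curvature quantity in hyperbolic space. -/
noncomputable def Ltil (m : ℕ) (x : Fin m → ℝ) (k : ℕ) : ℝ :=
  ∑ i ∈ Finset.range (k + 1), (k.choose i : ℝ) * (-1 : ℝ) ^ (k - i) * Hnorm m x (2 * i)

/-- `Ñ_k(κ) = Σ_{i=0}^{k} C(k,i) (−1)^{k−i} H_{2i+1}(κ)`. -/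
noncomputable def Ntil (m : ℕ) (x : Fin m → ℝ) (k : ℕ) : ℝ :=
  ∑ i ∈ Finset.range (k + 1), (k.choose i : ℝ) * (-1 : ℝ) ^ (k - i) * Hnorm m x (2 * i + 1)

set_option maxHeartbeats 1600000

open Polynomial Finset

lemma esymmR_eq_coeff (m : ℕ) (x : Fin m → ℝ) (k : ℕ) :
    esymmR m x k = (∏ p : Fin m, (C (x p) * X + 1)).coeff k := by
  rw [Finset.prod_add]
  simp only [Finset.prod_const_one, mul_one]
  have : ∀ t : Finset (Fin m), (∏ i ∈ t, (C (x i) * X)) = C (∏ i ∈ t, x i) * X ^ t.card := by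
    intro t
    rw [Finset.prod_mul_distrib, Finset.prod_const, map_prod]
  rw [Polynomial.finset_sum_coeff]
  simp only [this, Polynomial.coeff_C_mul, Polynomial.coeff_X_pow]
  rw [esymmR]
  rw [Finset.powersetCard_eq_filter, Finset.sum_filter]
  apply Finset.sum_congr rfl
  intro t _
  by_cases h : k = t.card
  · simp [h]
  · rw [if_neg h, if_neg (fun hc => h hc.symm), mul_zero]

lemma esymmR_zero (m : ℕ) (x : Fin m → ℝ) : esymmR m x 0 = 1 := by
  simp [esymmR]

lemma esymmR_eq_zero (m : ℕ) (x : Fin m → ℝ) {k : ℕ} (h : m < k) : esymmR m x k = 0 := by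
  rw [esymmR, Finset.powersetCard_eq_empty.2 (by simpa using h), Finset.sum_empty]

lemma esymmR_nonneg {m : ℕ} {x : Fin m → ℝ} (hx : ∀ p, 0 ≤ x p) (k : ℕ) :
    0 ≤ esymmR m x k :=
  Finset.sum_nonneg fun s _ => Finset.prod_nonneg fun i _ => hx i

lemma esymmR_succ (m : ℕ) (x : Fin (m+1) → ℝ) (j : ℕ) :
    esymmR (m+1) x (j+1) =
      esymmR m (x ∘ Fin.castSucc) (j+1) + x (Fin.last m) * esymmR m (x ∘ Fin.castSucc) j := by
  rw [esymmR_eq_coeff, esymmR_eq_coeff, esymmR_eq_coeff, Fin.prod_univ_castSucc]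
  simp only [Function.comp]
  rw [mul_add, mul_one, Polynomial.coeff_add, mul_comm _ (C (x (Fin.last m)) * X),
    mul_assoc, Polynomial.coeff_C_mul, Polynomial.coeff_X_mul]
  ring
lemma Hnorm_zero (m : ℕ) (x : Fin m → ℝ) : Hnorm m x 0 = 1 := by
  simp [Hnorm, esymmR_zero]

lemma Hnorm_eq_zero (m : ℕ) (x : Fin m → ℝ) {k : ℕ} (h : m < k) : Hnorm m x k = 0 := by
  simp [Hnorm, esymmR_eq_zero m x h]

lemma Hnorm_nonneg {m : ℕ} {x : Fin m → ℝ} (hx : ∀ p, 0 ≤ x p) (k : ℕ) :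
    0 ≤ Hnorm m x k :=
  div_nonneg (esymmR_nonneg hx k) (Nat.cast_nonneg _)

lemma Hnorm_succ_rec (m : ℕ) (x : Fin (m+1) → ℝ) (j : ℕ) :
    ((m:ℝ)+1) * Hnorm (m+1) x j =
      ((m:ℝ)+1-j) * Hnorm m (x ∘ Fin.castSucc) j
        + (j:ℝ) * x (Fin.last m) * Hnorm m (x ∘ Fin.castSucc) (j-1) := by
  rcases j with _ | j
  · simp [Hnorm_zero]
  rcases Nat.lt_or_ge m (j+1) with hm | hm
  · -- j + 1 > m
    rcases Nat.lt_or_ge m j with hm' | hm'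
    · -- j > m : everything vanishes
      have h1 : Hnorm (m+1) x (j+1) = 0 := Hnorm_eq_zero _ _ (by omega)
      have h2 : Hnorm m (x ∘ Fin.castSucc) (j+1) = 0 := Hnorm_eq_zero _ _ (by omega)
      have h3 : Hnorm m (x ∘ Fin.castSucc) j = 0 := Hnorm_eq_zero _ _ (by omega)
      simp [h1, h2, h3]
    · -- j = m
      have hjm : j = m := by omega
      subst hjm
      have h2 : esymmR j (x ∘ Fin.castSucc) (j+1) = 0 := esymmR_eq_zero _ _ (by omega)
      simp only [Hnorm, esymmR_succ, h2, Nat.add_sub_cancel, zero_add,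
        Nat.choose_self, Nat.choose_succ_self, Nat.cast_zero, div_zero, mul_zero,
        Nat.cast_one, div_one, zero_mul, zero_add]
      push_cast
      ring
  · -- j + 1 ≤ m
    have hA : ((m:ℝ)+1) * (m.choose (j+1) : ℝ) = ((m:ℝ)+1-((j:ℝ)+1)) * ((m+1).choose (j+1) : ℝ) := by
      have hc := congrArg (Nat.cast : ℕ → ℝ) (Nat.choose_mul_succ_eq m (j+1))
      push_cast at hc
      rw [Nat.cast_sub (by omega : j ≤ m)] at hc
      push_cast at hc
      linarith [hc]
    have hB : ((m:ℝ)+1) * (m.choose j : ℝ) = ((j:ℝ)+1) * ((m+1).choose (j+1) : ℝ) := by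
      have hc := congrArg (Nat.cast : ℕ → ℝ) (Nat.add_one_mul_choose_eq m j)
      push_cast at hc
      linarith [hc]
    have d1 : ((m+1).choose (j+1) : ℝ) ≠ 0 := by
      simp [Nat.choose_eq_zero_iff]; omega
    have d2 : (m.choose (j+1) : ℝ) ≠ 0 := by
      simp [Nat.choose_eq_zero_iff]; omega
    have d3 : (m.choose j : ℝ) ≠ 0 := by
      simp [Nat.choose_eq_zero_iff]; omega
    have e1eq : (((m:ℝ)+1-((j:ℝ)+1))) / (m.choose (j+1) : ℝ) = ((m:ℝ)+1)/(((m+1).choose (j+1) : ℝ)) := by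
      rw [div_eq_div_iff d2 d1]; linarith [hA]
    have e0eq : (((j:ℝ)+1)) / (m.choose j : ℝ) = ((m:ℝ)+1)/(((m+1).choose (j+1) : ℝ)) := by
      rw [div_eq_div_iff d3 d1]; linarith [hB]
    simp only [Hnorm, esymmR_succ, Nat.add_sub_cancel]
    push_cast
    calc ((m:ℝ)+1) * ((esymmR m (x ∘ Fin.castSucc) (j+1) + x (Fin.last m) * esymmR m (x ∘ Fin.castSucc) j) / (((m+1).choose (j+1) : ℝ)))
        = (((m:ℝ)+1)/(((m+1).choose (j+1) : ℝ))) * esymmR m (x ∘ Fin.castSucc) (j+1)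
          + (((m:ℝ)+1)/(((m+1).choose (j+1) : ℝ))) * (x (Fin.last m) * esymmR m (x ∘ Fin.castSucc) j) := by
          ring
      _ = ((((m:ℝ)+1-((j:ℝ)+1))) / (m.choose (j+1) : ℝ)) * esymmR m (x ∘ Fin.castSucc) (j+1)
          + ((((j:ℝ)+1)) / (m.choose j : ℝ)) * (x (Fin.last m) * esymmR m (x ∘ Fin.castSucc) j) := by
          rw [e1eq, e0eq]
      _ = ((m:ℝ)+1-((j:ℝ)+1)) * (esymmR m (x ∘ Fin.castSucc) (j+1) / (m.choose (j+1) : ℝ))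
          + ((j:ℝ)+1) * x (Fin.last m) * (esymmR m (x ∘ Fin.castSucc) j / (m.choose j : ℝ)) := by
          ring
lemma esymmR_zero_succ : ∀ (m : ℕ) (y : Fin m → ℝ), (∀ p, 0 ≤ y p) → ∀ j : ℕ,
    esymmR m y j = 0 → esymmR m y (j+1) = 0 := by
  intro m
  induction m with
  | zero =>
    intro y _ j _
    exact esymmR_eq_zero _ _ (by omega)
  | succ m IH =>
    intro y hy j h
    rcases j with _ | j
    · rw [esymmR_zero] at h; norm_num at h
    have hy' : ∀ p, 0 ≤ (y ∘ Fin.castSucc) p := fun p => hy _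
    rw [esymmR_succ] at h
    have h1 : 0 ≤ esymmR m (y ∘ Fin.castSucc) (j+1) := esymmR_nonneg hy' _
    have h2 : 0 ≤ y (Fin.last m) * esymmR m (y ∘ Fin.castSucc) j :=
      mul_nonneg (hy _) (esymmR_nonneg hy' _)
    have hz1 : esymmR m (y ∘ Fin.castSucc) (j+1) = 0 := by linarith
    have hz2 : esymmR m (y ∘ Fin.castSucc) (j+2) = 0 := IH _ hy' _ hz1
    rw [esymmR_succ, hz1, hz2]
    ring

lemma Hnorm_zero_succ {m : ℕ} {y : Fin m → ℝ} (hy : ∀ p, 0 ≤ y p) {j : ℕ}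
    (h : Hnorm m y j = 0) : Hnorm m y (j+1) = 0 := by
  rcases Nat.lt_or_ge m (j+1) with hm | hm
  · exact Hnorm_eq_zero _ _ hm
  · have hc : (m.choose j : ℝ) ≠ 0 := by
      simp [Nat.choose_eq_zero_iff]; omega
    rw [Hnorm, _root_.div_eq_zero_iff] at h
    have he : esymmR m y j = 0 := by tauto
    rw [Hnorm, esymmR_zero_succ m y hy j he, zero_div]

theorem crossNewton : ∀ (m : ℕ) (y : Fin m → ℝ), (∀ p, 0 ≤ y p) → ∀ r s : ℕ, r ≤ s →
    Hnorm m y r * Hnorm m y (s+1) ≤ Hnorm m y (r+1) * Hnorm m y s := by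
  intro m
  induction m with
  | zero =>
    intro y hy r s _
    rw [Hnorm_eq_zero _ _ (by omega : 0 < s+1), mul_zero]
    exact mul_nonneg (Hnorm_nonneg hy _) (Hnorm_nonneg hy _)
  | succ m IH =>
    intro y hy
    have hy' : ∀ p, 0 ≤ (y ∘ Fin.castSucc) p := fun p => hy _
    have ht : 0 ≤ y (Fin.last m) := hy _
    set t := y (Fin.last m) with htdef
    have hM : (0:ℝ) < (m:ℝ)+1 := by positivity
    -- plain Newton at m+1 variables
    have newton : ∀ r : ℕ, Hnorm (m+1) y r * Hnorm (m+1) y (r+2) ≤ Hnorm (m+1) y (r+1) ^ 2 := by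
      intro r
      rcases Nat.lt_or_ge m (r+1) with hr | hr
      · -- r ≥ m : H_{r+2} = 0
        rw [Hnorm_eq_zero _ _ (by omega : m+1 < r+2), mul_zero]
        positivity
      -- r + 2 ≤ m + 1
      have hposM2 : (0:ℝ) < ((m:ℝ)+1)^2 := by positivity
      have hrec0 := Hnorm_succ_rec m y r
      have hrec1 := Hnorm_succ_rec m y (r+1)
      have hrec2 := Hnorm_succ_rec m y (r+2)
      simp only [Nat.add_sub_cancel] at hrec1 hrec2
      rcases r with _ | q
      · -- r = 0
        have hrR : (1:ℝ) ≤ (m:ℝ) := by exact_mod_cast hr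
        have h0 : Hnorm (m+1) y 0 = 1 := Hnorm_zero _ _
        have h0' : Hnorm m (y ∘ Fin.castSucc) 0 = 1 := Hnorm_zero _ _
        rw [h0'] at hrec1
        have A := IH (y ∘ Fin.castSucc) hy' 0 1 (by omega)
        rw [Hnorm_zero] at A
        push_cast at hrec1 hrec2
        show Hnorm (m+1) y 0 * Hnorm (m+1) y 2 ≤ Hnorm (m+1) y 1 ^ 2
        rw [h0, one_mul, ← mul_le_mul_iff_right₀ hposM2]
        have E1 : (((m:ℝ)+1) * Hnorm (m+1) y 1)^2
            = (((m:ℝ)+1-1) * Hnorm m (y ∘ Fin.castSucc) 1 + 1 * y (Fin.last m) * 1)^2 := by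
          rw [hrec1]
        nlinarith [E1, hrec2, sq_nonneg (Hnorm m (y ∘ Fin.castSucc) 1 - t),
          mul_nonneg (mul_nonneg hM.le (by linarith [hrR] : (0:ℝ) ≤ (m:ℝ)+1-2))
            (by linarith [A] : (0:ℝ) ≤ Hnorm m (y ∘ Fin.castSucc) 1 * Hnorm m (y ∘ Fin.castSucc) 1 - Hnorm m (y ∘ Fin.castSucc) 2)]
      · -- r = q+1
        have hq : q + 3 ≤ m + 1 := by omega
        have hrR : ((q:ℝ)+2) ≤ (m:ℝ) := by exact_mod_cast hr
        simp only [Nat.add_sub_cancel] at hrec0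
        have A := IH (y ∘ Fin.castSucc) hy' (q+1) (q+2) (by omega)
        have B := IH (y ∘ Fin.castSucc) hy' q (q+2) (by omega)
        have Cc := IH (y ∘ Fin.castSucc) hy' q (q+1) (by omega)
        push_cast at hrec0 hrec1 hrec2
        show Hnorm (m+1) y (q+1) * Hnorm (m+1) y (q+3) ≤ Hnorm (m+1) y (q+2) ^ 2
        rw [← mul_le_mul_iff_right₀ hposM2]
        have E1 := congrArg (fun z => z^2) hrec1
        have E2 := congrArg₂ (fun z w => z*w) hrec0 hrec2
        linarith [E1, E2,
          sq_nonneg (Hnorm m (y ∘ Fin.castSucc) (q+2) - t * Hnorm m (y ∘ Fin.castSucc) (q+1)),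
          mul_nonneg (mul_nonneg (by linarith [hrR] : (0:ℝ) ≤ (m:ℝ)+1-((q:ℝ)+1)) (by linarith [hrR] : (0:ℝ) ≤ (m:ℝ)+1-((q:ℝ)+1)-2))
            (by nlinarith [A] : (0:ℝ) ≤ Hnorm m (y ∘ Fin.castSucc) (q+2) * Hnorm m (y ∘ Fin.castSucc) (q+2) - Hnorm m (y ∘ Fin.castSucc) (q+1) * Hnorm m (y ∘ Fin.castSucc) (q+3)),
          mul_nonneg (mul_nonneg (mul_nonneg ht (by positivity : (0:ℝ) ≤ (q:ℝ)+1)) (by linarith [hrR] : (0:ℝ) ≤ (m:ℝ)+1-((q:ℝ)+1)-2))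
            (by nlinarith [B] : (0:ℝ) ≤ Hnorm m (y ∘ Fin.castSucc) (q+1) * Hnorm m (y ∘ Fin.castSucc) (q+2) - Hnorm m (y ∘ Fin.castSucc) q * Hnorm m (y ∘ Fin.castSucc) (q+3)),
          mul_nonneg (mul_nonneg (mul_nonneg (mul_nonneg ht ht) (by positivity : (0:ℝ) ≤ (q:ℝ)+1)) (by positivity : (0:ℝ) ≤ (q:ℝ)+3))
            (by nlinarith [Cc] : (0:ℝ) ≤ Hnorm m (y ∘ Fin.castSucc) (q+1) * Hnorm m (y ∘ Fin.castSucc) (q+1) - Hnorm m (y ∘ Fin.castSucc) q * Hnorm m (y ∘ Fin.castSucc) (q+2))]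
    -- chain
    have chain : ∀ (d r : ℕ), Hnorm (m+1) y r * Hnorm (m+1) y (r+d+1) ≤
        Hnorm (m+1) y (r+1) * Hnorm (m+1) y (r+d) := by
      intro d
      induction d with
      | zero => intro r; simp only [Nat.add_zero]; exact le_of_eq (mul_comm _ _)
      | succ d IHd =>
        intro r
        by_cases hz : Hnorm (m+1) y (r+d+1) = 0
        · have hz2 : Hnorm (m+1) y (r+d+2) = 0 := Hnorm_zero_succ hy hz
          have : r + (d+1) + 1 = r+d+2 := by ring
          rw [this, hz2, mul_zero]
          exact mul_nonneg (Hnorm_nonneg hy _) (Hnorm_nonneg hy _)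
        · have hpos1 : 0 < Hnorm (m+1) y (r+d+1) :=
            lt_of_le_of_ne (Hnorm_nonneg hy _) (Ne.symm hz)
          have hposd : 0 < Hnorm (m+1) y (r+d) := by
            rcases lt_or_eq_of_le (Hnorm_nonneg hy (r+d)) with h | h
            · exact h
            · exact absurd (Hnorm_zero_succ hy h.symm) hz
          have hnewt := newton (r+d)
          have hIHd := IHd r
          have e1 : Hnorm (m+1) y r * (Hnorm (m+1) y (r+d) * Hnorm (m+1) y (r+d+2)) ≤
              Hnorm (m+1) y r * Hnorm (m+1) y (r+d+1) ^ 2 := by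
            apply mul_le_mul_of_nonneg_left _ (Hnorm_nonneg hy r)
            convert hnewt using 3 <;> ring_nf
          have e2 : (Hnorm (m+1) y r * Hnorm (m+1) y (r+d+1)) * Hnorm (m+1) y (r+d+1) ≤
              (Hnorm (m+1) y (r+1) * Hnorm (m+1) y (r+d)) * Hnorm (m+1) y (r+d+1) :=
            mul_le_mul_of_nonneg_right hIHd hpos1.le
          have key : Hnorm (m+1) y (r+d) * (Hnorm (m+1) y r * Hnorm (m+1) y (r+d+2)) ≤
              Hnorm (m+1) y (r+d) * (Hnorm (m+1) y (r+1) * Hnorm (m+1) y (r+d+1)) := by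
            nlinarith [e1, e2]
          have := le_of_mul_le_mul_left key hposd
          calc Hnorm (m+1) y r * Hnorm (m+1) y (r+(d+1)+1)
              = Hnorm (m+1) y r * Hnorm (m+1) y (r+d+2) := by ring_nf
            _ ≤ Hnorm (m+1) y (r+1) * Hnorm (m+1) y (r+d+1) := this
            _ = Hnorm (m+1) y (r+1) * Hnorm (m+1) y (r+(d+1)) := by ring_nf
    intro r s hrs
    obtain ⟨d, rfl⟩ := Nat.exists_eq_add_of_le hrs
    exact chain d r
lemma esymmR_shift (m : ℕ) (x : Fin m → ℝ) (j : ℕ) (hj : j ≤ m) :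
    esymmR m (fun p => x p + 1) j =
      ∑ r ∈ Finset.range (j+1), ((m-r).choose (j-r) : ℝ) * esymmR m x r := by
  have key : (∏ p : Fin m, (C (x p + 1) * X + 1)).coeff j =
      ∑ r ∈ Finset.range (j+1), ((m-r).choose (j-r) : ℝ) * esymmR m x r := by
    have hprod : (∏ p : Fin m, (C (x p + 1) * X + 1)) =
        ∏ p : Fin m, (C (x p) * X + (X + 1)) := by
      apply Finset.prod_congr rfl
      intro p _
      simp [map_add]
      ring
    rw [hprod, Finset.prod_add]
    have hterm : ∀ t : Finset (Fin m),
        ((∏ i ∈ t, (C (x i) * X)) * ∏ _i ∈ Finset.univ \ t, ((X:ℝ[X]) + 1)).coeff j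
          = if t.card ≤ j then (∏ i ∈ t, x i) * ((m - t.card).choose (j - t.card) : ℝ) else 0 := by
      intro t
      have h1 : (∏ i ∈ t, (C (x i) * X)) = C (∏ i ∈ t, x i) * X ^ t.card := by
        rw [Finset.prod_mul_distrib, Finset.prod_const, map_prod]
      have h2 : (∏ _i ∈ Finset.univ \ t, ((X:ℝ[X]) + 1)) = (X + 1) ^ (m - t.card) := by
        rw [Finset.prod_const, Finset.card_sdiff_of_subset (Finset.subset_univ t), Finset.card_univ,
          Fintype.card_fin]
      rw [h1, h2]
      have h3 : (C (∏ i ∈ t, x i) * X ^ t.card) * ((X:ℝ[X]) + 1) ^ (m - t.card)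
          = (((X:ℝ[X]) + 1) ^ (m - t.card) * X ^ t.card) * C (∏ i ∈ t, x i) := by ring
      rw [h3, Polynomial.coeff_mul_C, Polynomial.coeff_mul_X_pow']
      by_cases h : t.card ≤ j
      · rw [if_pos h, if_pos h, Polynomial.coeff_X_add_one_pow]
        ring
      · rw [if_neg h, if_neg h, zero_mul]
    rw [Polynomial.finset_sum_coeff]
    simp only [hterm]
    rw [Finset.powerset_card_biUnion, Finset.sum_biUnion]
    swap
    · intro u _ v _ huv
      apply Finset.disjoint_left.mpr
      intro s hs hs'
      rw [Finset.mem_powersetCard] at hs hs'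
      exact absurd (hs.2.symm.trans hs'.2) huv
    · rw [Finset.card_univ, Fintype.card_fin]
      rw [← Finset.sum_subset (Finset.range_subset_range.2 (by omega : j+1 ≤ m+1))]
      · apply Finset.sum_congr rfl
        intro r hr
        rw [Finset.mem_range] at hr
        rw [esymmR, Finset.mul_sum, Finset.sum_congr rfl]
        intro t ht
        rw [Finset.mem_powersetCard_univ] at ht
        rw [ht, if_pos (by omega : r ≤ j)]
        ring
      · intro r hr hnr
        rw [Finset.mem_range] at hr
        rw [Finset.mem_range, not_lt] at hnr
        apply Finset.sum_eq_zero
        intro t ht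
        rw [Finset.mem_powersetCard_univ] at ht
        rw [ht, if_neg (by omega)]
  -- esymmR = coeff
  rw [esymmR_eq_coeff m (fun p => x p + 1) j, key]

lemma Hnorm_shift (m : ℕ) (x : Fin m → ℝ) (j : ℕ) (hj : j ≤ m) :
    Hnorm m (fun p => x p + 1) j =
      ∑ r ∈ Finset.range (j+1), (j.choose r : ℝ) * Hnorm m x r := by
  rw [Hnorm, esymmR_shift m x j hj, Finset.sum_div]
  apply Finset.sum_congr rfl
  intro r hr
  rw [Finset.mem_range] at hr
  have hrj : r ≤ j := by omega
  rw [Hnorm]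
  have hid := congrArg (Nat.cast : ℕ → ℝ) (Nat.choose_mul (n := m) hrj)
  push_cast at hid
  have d1 : (m.choose j : ℝ) ≠ 0 := by simp [Nat.choose_eq_zero_iff]; omega
  have d2 : (m.choose r : ℝ) ≠ 0 := by simp [Nat.choose_eq_zero_iff]; omega
  field_simp
  linear_combination (esymmR m x r) * hid.symm
def Scoef (k r : ℕ) : ℕ := if k ≤ r then (k.choose (r-k)) * 2^(2*k-r) else 0

lemma Scoef_eq_zero {k r : ℕ} (h : 2*k < r) : Scoef k r = 0 := by
  rw [Scoef]
  by_cases hk : k ≤ r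
  · rw [if_pos hk, Nat.choose_eq_zero_of_lt (by omega), zero_mul]
  · rw [if_neg hk]

lemma star1 (k r : ℕ) :
    (∑ i ∈ Finset.range (k+1), (k.choose i : ℝ) * (-1)^(k-i) * ((2*i).choose r : ℝ))
      = (Scoef k r : ℝ) := by
  have hC2 : (Polynomial.C (2:ℝ) : ℝ[X]) = 2 := by
    rw [show (2:ℝ) = ((2:ℕ):ℝ) by norm_num, Polynomial.C_eq_natCast]
    norm_num
  have hq : (((X:ℝ[X]) + 1)^2 - 1)^k = (X + C 2)^k * X^k := by
    rw [hC2, ← mul_pow]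
    congr 1
    ring
  have hexp : (((X:ℝ[X]) + 1)^2 - 1)^k
      = ∑ i ∈ Finset.range (k+1), (X+1)^(2*i) * C ((-1:ℝ)^(k-i) * (k.choose i : ℝ)) := by
    rw [sub_eq_add_neg, add_pow]
    apply Finset.sum_congr rfl
    intro i _
    rw [← pow_mul, mul_comm 2 i]
    simp only [map_mul, map_pow, map_neg, map_one, map_natCast]
    ring
  have h1 : ((((X:ℝ[X]) + 1)^2 - 1)^k).coeff r
      = ∑ i ∈ Finset.range (k+1), ((2*i).choose r : ℝ) * ((-1:ℝ)^(k-i) * (k.choose i : ℝ)) := by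
    rw [hexp, Polynomial.finset_sum_coeff]
    apply Finset.sum_congr rfl
    intro i _
    rw [Polynomial.coeff_mul_C, Polynomial.coeff_X_add_one_pow]
  have h2 : ((((X:ℝ[X]) + 1)^2 - 1)^k).coeff r = (Scoef k r : ℝ) := by
    rw [hq, Polynomial.coeff_mul_X_pow', Scoef]
    by_cases hk : k ≤ r
    · rw [if_pos hk, if_pos hk, Polynomial.coeff_X_add_C_pow]
      have : k - (r - k) = 2*k - r := by omega
      rw [this]
      push_cast
      ring
    · rw [if_neg hk, if_neg hk, Nat.cast_zero]
  rw [← h2, h1]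
  apply Finset.sum_congr rfl
  intro i _
  ring

lemma star2 (k r : ℕ) :
    (∑ i ∈ Finset.range (k+1), (k.choose i : ℝ) * (-1)^(k-i) * ((2*i+1).choose r : ℝ))
      = (Scoef k r : ℝ) + (if 1 ≤ r then (Scoef k (r-1) : ℝ) else 0) := by
  have key : ∀ i, ((2*i+1).choose r : ℝ)
      = ((2*i).choose r : ℝ) + (if 1 ≤ r then (((2*i).choose (r-1) : ℕ) : ℝ) else 0) := by
    intro i
    rcases r with _ | r'
    · simp
    · rw [if_pos (by omega)]
      have : (2*i+1).choose (r'+1) = (2*i).choose r' + (2*i).choose (r'+1) :=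
        Nat.choose_succ_succ (2*i) r'
      rw [this]
      push_cast
      ring
  simp only [key, mul_add]
  rw [Finset.sum_add_distrib, star1]
  congr 1
  by_cases hr : 1 ≤ r
  · simp only [if_pos hr]
    rw [← star1 k (r-1)]
  · simp only [if_neg hr]
    simp
lemma chooseTP2 : ∀ (d a b r : ℕ), a ≤ b → b ≤ r → r + d ≤ 2*a →
    a.choose (r+d-a) * b.choose (r-b) ≤ a.choose (r-a) * b.choose (r+d-b) := by
  intro d
  induction d with
  | zero => intro a b r _ _ _; simp
  | succ d IH =>
    intro a b r hab hbr hrd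
    have hIH := IH a b r hab hbr (by omega)
    set u := r + d with hu
    have hau : a ≤ u := by omega
    have hbu : b ≤ u := by omega
    have key1 : a.choose (u+1-a) * (u+1-a) = a.choose (u-a) * (2*a-u) := by
      have h1 : u+1-a = (u-a)+1 := by omega
      have h2 : a - (u-a) = 2*a-u := by omega
      rw [h1, Nat.choose_succ_right_eq, h2]
    have key2 : b.choose (u+1-b) * (u+1-b) = b.choose (u-b) * (2*b-u) := by
      have h1 : u+1-b = (u-b)+1 := by omega
      have h2 : b - (u-b) = 2*b-u := by omega
      rw [h1, Nat.choose_succ_right_eq, h2]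
    have hscal : (2*a-u) * (u+1-b) ≤ (2*b-u) * (u+1-a) :=
      Nat.mul_le_mul (by omega) (by omega)
    have hpos : 0 < (u+1-a) * (u+1-b) := by
      apply Nat.mul_pos <;> omega
    apply Nat.le_of_mul_le_mul_right _ hpos
    calc a.choose (u+1-a) * b.choose (r-b) * ((u+1-a) * (u+1-b))
        = (a.choose (u+1-a) * (u+1-a)) * b.choose (r-b) * (u+1-b) := by ring
      _ = (a.choose (u-a) * (2*a-u)) * b.choose (r-b) * (u+1-b) := by rw [key1]
      _ = (a.choose (u-a) * b.choose (r-b)) * ((2*a-u) * (u+1-b)) := by ring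
      _ ≤ (a.choose (r-a) * b.choose (u-b)) * ((2*b-u) * (u+1-a)) := Nat.mul_le_mul hIH hscal
      _ = (b.choose (u-b) * (2*b-u)) * a.choose (r-a) * (u+1-a) := by ring
      _ = (b.choose (u+1-b) * (u+1-b)) * a.choose (r-a) * (u+1-a) := by rw [key2]
      _ = a.choose (r-a) * b.choose (u+1-b) * ((u+1-a) * (u+1-b)) := by ring

lemma Scoef_tp2 {a b r s : ℕ} (hab : a ≤ b) (hrs : r ≤ s) :
    Scoef a s * Scoef b r ≤ Scoef a r * Scoef b s := by
  rcases Nat.eq_zero_or_pos (Scoef a s * Scoef b r) with h0 | hpos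
  · rw [h0]; exact Nat.zero_le _
  have h1 : Scoef a s ≠ 0 := by intro h; rw [h, zero_mul] at hpos; omega
  have h2 : Scoef b r ≠ 0 := by intro h; rw [h, mul_zero] at hpos; omega
  have has : a ≤ s := by by_contra h; exact h1 (by rw [Scoef, if_neg h])
  have hbr : b ≤ r := by by_contra h; exact h2 (by rw [Scoef, if_neg h])
  have hs2a : s ≤ 2*a := by
    by_contra h
    exact h1 (by rw [Scoef, if_pos has, Nat.choose_eq_zero_of_lt (by omega), zero_mul])
  -- a ≤ b ≤ r ≤ s ≤ 2a ≤ 2b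
  have har : a ≤ r := le_trans hab hbr
  have hbs : b ≤ s := le_trans hbr hrs
  rw [Scoef, Scoef, Scoef, Scoef, if_pos has, if_pos hbr, if_pos har, if_pos hbs]
  have hpow : 2^(2*a-s) * 2^(2*b-r) = 2^(2*a-r) * 2^(2*b-s) := by
    rw [← pow_add, ← pow_add]
    congr 1
    omega
  obtain ⟨d, rfl⟩ := Nat.exists_eq_add_of_le hrs
  calc a.choose (r+d-a) * 2^(2*a-(r+d)) * (b.choose (r-b) * 2^(2*b-r))
      = (a.choose (r+d-a) * b.choose (r-b)) * (2^(2*a-(r+d)) * 2^(2*b-r)) := by ring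
    _ ≤ (a.choose (r-a) * b.choose (r+d-b)) * (2^(2*a-(r+d)) * 2^(2*b-r)) :=
        Nat.mul_le_mul_right _ (chooseTP2 d a b r hab hbr (by omega))
    _ = (a.choose (r-a) * b.choose (r+d-b)) * (2^(2*a-r) * 2^(2*b-(r+d))) := by rw [hpow]
    _ = a.choose (r-a) * 2^(2*a-r) * (b.choose (r+d-b) * 2^(2*b-(r+d))) := by ring
lemma Ltil_repr (m k N : ℕ) (y : Fin m → ℝ) (h2k : 2*k ≤ m) (hN : 2*k+1 ≤ N) :
    Ltil m (fun p => y p + 1) k = ∑ r ∈ Finset.range N, (Scoef k r : ℝ) * Hnorm m y r := by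
  rw [Ltil]
  have hstep : ∀ i ∈ Finset.range (k+1),
      (k.choose i:ℝ)*(-1:ℝ)^(k-i)*Hnorm m (fun p => y p+1) (2*i)
      = ∑ r ∈ Finset.range N, (k.choose i:ℝ)*(-1:ℝ)^(k-i)*((2*i).choose r:ℝ)*Hnorm m y r := by
    intro i hi
    rw [Finset.mem_range] at hi
    rw [Hnorm_shift m y (2*i) (by omega), Finset.mul_sum]
    rw [Finset.sum_subset (Finset.range_subset_range.2 (by omega : 2*i+1 ≤ N))]
    · exact Finset.sum_congr rfl (fun r _ => by ring)
    · intro r _ hnr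
      rw [Finset.mem_range, not_lt] at hnr
      rw [Nat.choose_eq_zero_of_lt (show 2*i < r by omega)]
      simp
  rw [Finset.sum_congr rfl hstep, Finset.sum_comm]
  apply Finset.sum_congr rfl
  intro r _
  rw [← Finset.sum_mul, star1]

lemma Ntil_repr (m k N : ℕ) (y : Fin m → ℝ) (h2k : 2*k+1 ≤ m) (hN : 2*k+1 ≤ N) :
    Ntil m (fun p => y p + 1) k
      = ∑ r ∈ Finset.range N, (Scoef k r : ℝ) * (Hnorm m y r + Hnorm m y (r+1)) := by
  rw [Ntil]
  have hstep : ∀ i ∈ Finset.range (k+1),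
      (k.choose i:ℝ)*(-1:ℝ)^(k-i)*Hnorm m (fun p => y p+1) (2*i+1)
      = ∑ r ∈ Finset.range (N+1), (k.choose i:ℝ)*(-1:ℝ)^(k-i)*((2*i+1).choose r:ℝ)*Hnorm m y r := by
    intro i hi
    rw [Finset.mem_range] at hi
    rw [Hnorm_shift m y (2*i+1) (by omega), Finset.mul_sum]
    rw [Finset.sum_subset (Finset.range_subset_range.2 (by omega : 2*i+1+1 ≤ N+1))]
    · exact Finset.sum_congr rfl (fun r _ => by ring)
    · intro r _ hnr
      rw [Finset.mem_range, not_lt] at hnr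
      rw [Nat.choose_eq_zero_of_lt (show 2*i+1 < r by omega)]
      simp
  rw [Finset.sum_congr rfl hstep, Finset.sum_comm]
  have hinner : ∀ r ∈ Finset.range (N+1),
      (∑ i ∈ Finset.range (k+1), (k.choose i:ℝ)*(-1:ℝ)^(k-i)*((2*i+1).choose r:ℝ)*Hnorm m y r)
      = ((Scoef k r : ℝ) + (if 1 ≤ r then (Scoef k (r-1) : ℝ) else 0)) * Hnorm m y r := by
    intro r _
    rw [← Finset.sum_mul, star2]
  rw [Finset.sum_congr rfl hinner]
  have hsplit : ∀ r ∈ Finset.range (N+1),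
      ((Scoef k r : ℝ) + (if 1 ≤ r then (Scoef k (r-1) : ℝ) else 0)) * Hnorm m y r
      = (Scoef k r : ℝ) * Hnorm m y r
        + (if 1 ≤ r then (Scoef k (r-1) : ℝ) else 0) * Hnorm m y r := by
    intro r _; ring
  rw [Finset.sum_congr rfl hsplit, Finset.sum_add_distrib]
  have hA : ∑ r ∈ Finset.range (N+1), (Scoef k r : ℝ) * Hnorm m y r
      = ∑ r ∈ Finset.range N, (Scoef k r : ℝ) * Hnorm m y r := by
    rw [Finset.sum_range_succ, Scoef_eq_zero (by omega : 2*k < N)]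
    simp
  have hB : ∑ r ∈ Finset.range (N+1), (if 1 ≤ r then (Scoef k (r-1) : ℝ) else 0) * Hnorm m y r
      = ∑ r ∈ Finset.range N, (Scoef k r : ℝ) * Hnorm m y (r+1) := by
    rw [Finset.sum_range_succ']
    rw [if_neg (by omega : ¬ (1 ≤ 0)), zero_mul, add_zero]
    apply Finset.sum_congr rfl
    intro r _
    rw [if_pos (by omega : 1 ≤ r+1), Nat.add_sub_cancel]
  rw [hA, hB, ← Finset.sum_add_distrib]
  exact Finset.sum_congr rfl (fun r _ => by ring)

lemma cross_LN (m a b : ℕ) (y : Fin m → ℝ) (hy : ∀ p, 0 ≤ y p) (hab : a ≤ b)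
    (h2b : 2*b+1 ≤ m) :
    Ntil m (fun p => y p+1) b * Ltil m (fun p => y p+1) a ≤
      Ntil m (fun p => y p+1) a * Ltil m (fun p => y p+1) b := by
  set N := 2*b+1 with hNdef
  set h : ℕ → ℝ := fun r => Hnorm m y r with hdef
  set SA := ∑ r ∈ Finset.range N, (Scoef a r : ℝ) * h r with hSA
  set SB := ∑ r ∈ Finset.range N, (Scoef b r : ℝ) * h r with hSB
  set TA := ∑ r ∈ Finset.range N, (Scoef a r : ℝ) * h (r+1) with hTA
  set TB := ∑ r ∈ Finset.range N, (Scoef b r : ℝ) * h (r+1) with hTB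
  have hLa : Ltil m (fun p => y p+1) a = SA := Ltil_repr m a N y (by omega) (by omega)
  have hLb : Ltil m (fun p => y p+1) b = SB := Ltil_repr m b N y (by omega) (by omega)
  have hNa : Ntil m (fun p => y p+1) a = SA + TA := by
    rw [Ntil_repr m a N y (by omega) (by omega), hSA, hTA, ← Finset.sum_add_distrib]
    exact Finset.sum_congr rfl (fun r _ => by ring)
  have hNb : Ntil m (fun p => y p+1) b = SB + TB := by
    rw [Ntil_repr m b N y (by omega) (by omega), hSB, hTB, ← Finset.sum_add_distrib]
    exact Finset.sum_congr rfl (fun r _ => by ring)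
  rw [hLa, hLb, hNa, hNb, ← sub_nonneg]
  have hkey : (SA + TA) * SB - (SB + TB) * SA = TA * SB - TB * SA := by ring
  rw [hkey]
  have hTASB : TA * SB = ∑ r ∈ Finset.range N, ∑ s ∈ Finset.range N,
      (Scoef a r : ℝ) * (Scoef b s : ℝ) * (h (r+1) * h s) := by
    rw [hTA, hSB, Finset.sum_mul_sum]
    exact Finset.sum_congr rfl (fun r _ => Finset.sum_congr rfl (fun s _ => by ring))
  have hTBSA : TB * SA = ∑ r ∈ Finset.range N, ∑ s ∈ Finset.range N,
      (Scoef a r : ℝ) * (Scoef b s : ℝ) * (h r * h (s+1)) := by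
    rw [hTB, hSA, Finset.sum_mul_sum, Finset.sum_comm]
    exact Finset.sum_congr rfl (fun r _ => Finset.sum_congr rfl (fun s _ => by ring))
  rw [hTASB, hTBSA, ← Finset.sum_sub_distrib]
  simp only [← Finset.sum_sub_distrib]
  -- D = Σ_{r,s} F r s with F r s := Wa r Wb s (h(r+1) h s − h r h(s+1))
  set F : ℕ → ℕ → ℝ := fun r s =>
    (Scoef a r : ℝ) * (Scoef b s : ℝ) * (h (r+1) * h s) -
      (Scoef a r : ℝ) * (Scoef b s : ℝ) * (h r * h (s+1)) with hF
  have hswap : ∑ r ∈ Finset.range N, ∑ s ∈ Finset.range N, F r s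
      = ∑ r ∈ Finset.range N, ∑ s ∈ Finset.range N, F s r := Finset.sum_comm
  have h2 : (2:ℝ) * (∑ r ∈ Finset.range N, ∑ s ∈ Finset.range N, F r s)
      = ∑ r ∈ Finset.range N, ∑ s ∈ Finset.range N, (F r s + F s r) := by
    rw [two_mul]
    nth_rewrite 2 [hswap]
    rw [← Finset.sum_add_distrib]
    exact Finset.sum_congr rfl (fun r _ => by rw [← Finset.sum_add_distrib])
  have hterm : ∀ r s : ℕ, 0 ≤ F r s + F s r := by
    intro r s
    have hfact : F r s + F s r =
        ((Scoef a r : ℝ) * (Scoef b s : ℝ) - (Scoef a s : ℝ) * (Scoef b r : ℝ)) *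
          (h (r+1) * h s - h r * h (s+1)) := by
      rw [hF]; ring
    rw [hfact]
    rcases le_total r s with hrs | hsr
    · apply mul_nonneg
      · rw [sub_nonneg]
        exact_mod_cast Scoef_tp2 hab hrs
      · rw [sub_nonneg]
        exact crossNewton m y hy r s hrs
    · have h1 : (Scoef a r : ℝ) * (Scoef b s : ℝ) - (Scoef a s : ℝ) * (Scoef b r : ℝ) ≤ 0 := by
        rw [sub_nonpos]
        exact_mod_cast Scoef_tp2 hab hsr
      have h2 : h (r+1) * h s - h r * h (s+1) ≤ 0 := by
        have hc := crossNewton m y hy s r hsr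
        simp only [hdef]
        linarith [hc]
      nlinarith [h1, h2]
  have hsum2 : 0 ≤ (2:ℝ) * (∑ r ∈ Finset.range N, ∑ s ∈ Finset.range N, F r s) := by
    rw [h2]
    exact Finset.sum_nonneg fun r _ => Finset.sum_nonneg fun s _ => hterm r s
  linarith
lemma cross_LN' (m a b : ℕ) (kap : Fin m → ℝ) (hkap : ∀ p, 1 ≤ kap p) (hab : a ≤ b)
    (h2b : 2*b+1 ≤ m) :
    Ntil m kap b * Ltil m kap a ≤ Ntil m kap a * Ltil m kap b := by
  have hy : ∀ p, 0 ≤ kap p - 1 := fun p => by linarith [hkap p]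
  have hfun : (fun p => (kap p - 1) + 1) = kap := by funext p; ring
  have := cross_LN m a b (fun p => kap p - 1) hy hab h2b
  rwa [hfun] at this



/-- If `κ_p ≥ 1` for all `p`, `1 ≤ l < k`, `2k+1 ≤ n−1`, and nonnegative constants satisfy
`Σ_{i=0}^{l−1} ã_i L̃_i = Σ_{j=l}^{k} b̃_j L̃_j > 0`, then
`Σ_{i=0}^{l−1} ã_i Ñ_i ≥ Σ_{j=l}^{k} b̃_j Ñ_j`. -/
theorem stmt_15 (n : ℕ) (hn : 3 ≤ n) (l k : ℕ) (hl : 1 ≤ l) (hlk : l < k)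
    (hk : 2 * k + 1 ≤ n - 1)
    (kap : Fin (n - 1) → ℝ) (hkap : ∀ p, 1 ≤ kap p)
    (a b : ℕ → ℝ)
    (ha : ∀ i ∈ Finset.range l, 0 ≤ a i)
    (hb : ∀ j ∈ Finset.Icc l k, 0 ≤ b j)
    (heq : ∑ i ∈ Finset.range l, a i * Ltil (n - 1) kap i =
           ∑ j ∈ Finset.Icc l k, b j * Ltil (n - 1) kap j)
    (hpos : 0 < ∑ j ∈ Finset.Icc l k, b j * Ltil (n - 1) kap j) :
    ∑ j ∈ Finset.Icc l k, b j * Ntil (n - 1) kap j ≤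
      ∑ i ∈ Finset.range l, a i * Ntil (n - 1) kap i := by
  have main : (∑ j ∈ Finset.Icc l k, b j * Ntil (n-1) kap j) * (∑ i ∈ Finset.range l, a i * Ltil (n-1) kap i)
      ≤ (∑ i ∈ Finset.range l, a i * Ntil (n-1) kap i) * (∑ j ∈ Finset.Icc l k, b j * Ltil (n-1) kap j) := by
    rw [Finset.sum_mul_sum, Finset.sum_mul_sum, Finset.sum_comm]
    apply Finset.sum_le_sum
    intro i hi
    apply Finset.sum_le_sum
    intro j hj
    have hiL : i < l := Finset.mem_range.1 hi
    have hjI := Finset.mem_Icc.1 hj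
    have hab2 : i ≤ j := by omega
    have h2j : 2*j+1 ≤ n-1 := by omega
    have hcross := cross_LN' (n-1) i j kap hkap hab2 h2j
    have hnn : 0 ≤ a i * b j := mul_nonneg (ha i hi) (hb j hj)
    nlinarith [mul_le_mul_of_nonneg_left hcross hnn]
  rw [heq] at main
  exact le_of_mul_le_mul_right main hpos
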